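/- Let G be an abelian group of order 2n, E a subgroup of index 2, O = G \ E, and let 0 ≠ x ∈ E. Define the Cayley graph G_x on vertex set O with edges {y,z}, y ≠ z, such that y + z = x or ±(y - z) = x. Let r(O) = |{a ∈ O : 2a = 0}|, r(E) = |{a ∈ E : 2a = 0}|, R(G) = {a ∈ G : 2a = 0}, and W = {a + a : a ∈ O}. Then the number of edges of G_x equals n - r(O)/2 - (r(E)/2)·1[x ∈ W] + ((n - r(O))/2)·1[x ∉ R(G)]. -/

import Mathlib

/-- The Cayley graph `G_S` on the nontrivial coset `O = G \ H` of an index-2 subgroup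
`H`: vertices are the elements of `O`, and `{y, z}` (with `y ≠ z`) is an edge iff
`y + z ∈ S` or `y - z ∈ S` or `z - y ∈ S`. -/
def cayley {G : Type*} [AddCommGroup G] (H : AddSubgroup G) (S : Set G) :
    SimpleGraph {g : G // g ∉ H} where
  Adj y z := y ≠ z ∧ ((y : G) + z ∈ S ∨ (y : G) - z ∈ S ∨ (z : G) - y ∈ S)
  symm := by
    constructor
    rintro y z ⟨h1, h2⟩
    refine ⟨h1.symm, ?_⟩
    rcases h2 with h | h | h
    · exact Or.inl (by rwa [add_comm])
    · exact Or.inr (Or.inr h)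
    · exact Or.inr (Or.inl h)
  loopless := by constructor; rintro y ⟨h1, _⟩; exact h1 rfl

section aux
variable {G : Type*} [AddCommGroup G] (E : AddSubgroup G)

lemma sub_mem_of_index_two (hE : E.index = 2) {a b : G} (ha : a ∉ E) (hb : b ∉ E) :
    a - b ∈ E := by
  obtain ⟨c, hc⟩ := AddSubgroup.index_eq_two_iff.mp hE
  have h1 := (hc a).resolve_right (fun h => ha h.1)
  have h2 := (hc b).resolve_right (fun h => hb h.1)
  have : (a + c) - (b + c) ∈ E := E.sub_mem h1.1 h2.1
  simpa using this

lemma add_not_mem' {a b : G} (ha : a ∈ E) (hb : b ∉ E) : a + b ∉ E := fun h => by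
  have : (a + b) - a ∈ E := E.sub_mem h ha
  simp at this; exact hb this

lemma sub_not_mem {a b : G} (ha : a ∈ E) (hb : b ∉ E) : a - b ∉ E := fun h => by
  have : a - (a - b) ∈ E := E.sub_mem ha h
  simp at this; exact hb this

lemma sub_not_mem' {a b : G} (ha : a ∉ E) (hb : b ∈ E) : a - b ∉ E := fun h => by
  have : (a - b) + b ∈ E := E.add_mem h hb
  simp at this; exact ha this

open Classical in
lemma cayley_degree [Fintype G] (x : G) (hx : x ∈ E) {y : G} (hy : y ∉ E) :
    (cayley E {x}).degree ⟨y, hy⟩ = (({x - y, y - x, y + x} : Finset G).erase y).card := by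
  rw [← SimpleGraph.card_neighborFinset_eq_degree]
  refine Finset.card_bij (fun z _ => (z : G)) ?_ ?_ ?_
  · rintro z hz
    rw [SimpleGraph.mem_neighborFinset] at hz
    obtain ⟨hne, h⟩ := hz
    rw [Finset.mem_erase]
    constructor
    · exact fun h' => hne (Subtype.ext h'.symm : (⟨y,hy⟩ : {g : G // g ∉ E}) = z)
    · simp only [Finset.mem_insert, Finset.mem_singleton]
      rcases h with h | h | h
      · simp only [Set.mem_singleton_iff] at h
        left; rw [← h]; abel
      · simp only [Set.mem_singleton_iff] at h
        right; left; rw [← h]; abel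
      · simp only [Set.mem_singleton_iff] at h
        right; right; rw [← h]; abel
  · intro a _ b _ h; exact Subtype.ext h
  · intro w hw
    rw [Finset.mem_erase] at hw
    obtain ⟨hwy, hw3⟩ := hw
    simp only [Finset.mem_insert, Finset.mem_singleton] at hw3
    have hwE : w ∉ E := by
      rcases hw3 with h | h | h
      · subst h; exact sub_not_mem E hx hy
      · subst h; exact sub_not_mem' E hy hx
      · subst h; rw [add_comm]; exact add_not_mem' E hx hy
    refine ⟨⟨w, hwE⟩, ?_, rfl⟩
    rw [SimpleGraph.mem_neighborFinset]
    refine ⟨fun h => hwy (congrArg Subtype.val h).symm, ?_⟩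
    simp only [Set.mem_singleton_iff]
    rcases hw3 with h | h | h
    · left; rw [h]; abel
    · right; left; rw [h]; abel
    · right; right; rw [h]; abel

end aux

section cardT
variable {G : Type*} [AddCommGroup G]

lemma eqIffAux {a b c d : G} (h : a - b = c - d) : a = b ↔ c = d := by
  rw [← sub_eq_zero, ← sub_eq_zero (a := c), h]

open Classical in
lemma cardT (x y : G) (hx0 : x ≠ 0) :
    ((({x - y, y - x, y + x} : Finset G).erase y).card : ℚ)
      = 3 - (if y + y = x then 1 else 0) - (if y + y = x + x then 1 else 0)
        - (if y + y = 0 then 1 else 0) - (if x + x = 0 then 1 else 0)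
        + (if x + x = 0 then 1 else 0) * (if y + y = 0 then 1 else 0) := by
  have i1 : x - y = y ↔ y + y = x := by
    rw [eqIffAux (c := x) (d := y + y) (by abel), eq_comm]
  have i2 : x - y = y - x ↔ y + y = x + x := by
    rw [eqIffAux (c := x + x) (d := y + y) (by abel), eq_comm]
  have i3 : x - y = y + x ↔ y + y = 0 := by
    rw [eqIffAux (c := (0:G)) (d := y + y) (by abel), eq_comm]
  have i4 : y - x = y + x ↔ x + x = 0 := by
    rw [eqIffAux (c := (0:G)) (d := x + x) (by abel), eq_comm]
  have i5 : y - x = y ↔ x = 0 := by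
    rw [eqIffAux (c := (0:G)) (d := x) (by abel), eq_comm]
  have i6 : y + x = y ↔ x = 0 := by
    rw [eqIffAux (c := x) (d := (0:G)) (by abel)]
  have e5 : y - x ≠ y := fun h => hx0 (i5.mp h)
  have e6 : y + x ≠ y := fun h => hx0 (i6.mp h)
  by_cases h1 : y + y = x
  · have h2 : ¬ y + y = x + x := fun h => hx0 (by rw [h1] at h; exact (left_eq_add.mp h))
    have h3 : ¬ y + y = 0 := fun h => hx0 (h1.symm.trans h)
    have ha : x - y = y := i1.mpr h1
    rw [ha, Finset.erase_insert (by
      simp only [Finset.mem_insert, Finset.mem_singleton]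
      push_neg
      exact ⟨Ne.symm e5, Ne.symm e6⟩)]
    by_cases h4 : x + x = 0
    · rw [i4.mpr h4, Finset.pair_eq_singleton, Finset.card_singleton,
        if_pos h1, if_neg h2, if_neg h3, if_pos h4]
      norm_num
    · rw [Finset.card_pair (fun h => h4 (i4.mp h)),
        if_pos h1, if_neg h2, if_neg h3, if_neg h4]
      norm_num
  · rw [Finset.erase_eq_of_notMem (by
      simp only [Finset.mem_insert, Finset.mem_singleton]
      push_neg
      exact ⟨fun h => h1 (i1.mp h.symm), Ne.symm e5, Ne.symm e6⟩)]
    by_cases h2 : y + y = x + x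
    · have hab : x - y = y - x := i2.mpr h2
      by_cases h3 : y + y = 0
      · have h4 : x + x = 0 := h2.symm.trans h3
        have hac : x - y = y + x := i3.mpr h3
        have hbc : y - x = y + x := i4.mpr h4
        rw [hab, hbc, Finset.pair_eq_singleton, Finset.pair_eq_singleton,
          Finset.card_singleton, if_neg h1, if_pos h2, if_pos h3, if_pos h4]
        norm_num
      · have h4 : ¬ x + x = 0 := fun h => h3 (h2.trans h)
        rw [hab, Finset.insert_idem, Finset.card_pair (fun h => h4 (i4.mp h)),
          if_neg h1, if_pos h2, if_neg h3, if_neg h4]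
        norm_num
    · by_cases h3 : y + y = 0
      · have h4 : ¬ x + x = 0 := fun h => h2 (h3.trans h.symm)
        have hac : x - y = y + x := i3.mpr h3
        rw [hac, Finset.insert_comm, Finset.pair_eq_singleton,
          Finset.card_pair (fun h => h4 (i4.mp h))]
        · rw [if_neg h1, if_neg h2, if_pos h3, if_neg h4]; norm_num
      · by_cases h4 : x + x = 0
        · rw [i4.mpr h4, Finset.pair_eq_singleton,
            Finset.card_pair (fun h => h2 (i2.mp ((i4.mpr h4) ▸ h))),
            if_neg h1, if_neg h2, if_neg h3, if_pos h4]
          norm_num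
        · rw [Finset.card_insert_of_notMem (by
            simp only [Finset.mem_insert, Finset.mem_singleton]
            push_neg
            exact ⟨fun h => h2 (i2.mp h), fun h => h3 (i3.mp h)⟩),
            Finset.card_pair (fun h => h4 (i4.mp h)),
            if_neg h1, if_neg h2, if_neg h3, if_neg h4]
          norm_num
end cardT

open Classical in
theorem stmt9 {G : Type*} [AddCommGroup G] [Fintype G] {n : ℕ}
    (hn : Fintype.card G = 2 * n) (E : AddSubgroup G) (hE : E.index = 2)
    (x : G) (hx : x ∈ E) (hx0 : x ≠ 0) :
    ((cayley E {x}).edgeSet.ncard : ℚ) =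
      (n : ℚ) - ({a ∈ ((E : Set G)ᶜ) | a + a = 0}.ncard : ℚ) / 2
        - (({a ∈ (E : Set G) | a + a = 0}.ncard : ℚ) / 2) *
            (if x ∈ (fun a : G => a + a) '' ((E : Set G)ᶜ) then 1 else 0)
        + (((n : ℚ) - ({a ∈ ((E : Set G)ᶜ) | a + a = 0}.ncard : ℚ)) / 2) *
            (if x + x = 0 then 0 else 1) := by
  classical
  set O : Finset G := Finset.univ.filter (fun g => g ∉ E) with hOdef
  have hmemO : ∀ g : G, g ∈ O ↔ g ∉ E := by
    intro g; rw [hOdef, Finset.mem_filter]; simp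
  -- |O| = n
  have hEcard : Nat.card E = n := by
    have h := AddSubgroup.card_mul_index E
    rw [hE, Nat.card_eq_fintype_card (α := G), hn] at h
    omega
  have hEfilter : (Finset.univ.filter (fun g : G => g ∈ E)).card = n := by
    rw [← Fintype.card_subtype, ← Nat.card_eq_fintype_card]
    exact hEcard
  have hOcard : O.card = n := by
    have h := Finset.card_filter_add_card_filter_not
      (s := (Finset.univ : Finset G)) (p := fun g : G => g ∈ E)
    rw [Finset.card_univ, hn, hEfilter] at h
    have h2 : O.card = (Finset.univ.filter fun g : G => ¬ g ∈ E).card := rfl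
    omega
  -- ncard conversions
  have hrO : ({a ∈ ((E : Set G)ᶜ) | a + a = 0}.ncard : ℚ)
      = ((O.filter fun y => y + y = 0).card : ℚ) := by
    norm_cast
    rw [Set.ncard_eq_toFinset_card']
    congr 1
    ext a
    simp [hOdef, Set.mem_toFinset]
  have hrE : ({a ∈ (E : Set G) | a + a = 0}.ncard : ℚ)
      = ((Finset.univ.filter fun a : G => a ∈ E ∧ a + a = 0).card : ℚ) := by
    norm_cast
    rw [Set.ncard_eq_toFinset_card']
    congr 1
    ext a
    simp [Set.mem_toFinset]
  -- S2 : #{y ∈ O | 2y = 2x} = #{y ∈ O | 2y = 0}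
  have hS2 : (O.filter fun y => y + y = x + x).card = (O.filter fun y => y + y = 0).card := by
    refine Finset.card_nbij' (fun y => y - x) (fun a => a + x) ?_ ?_ ?_ ?_
    · intro y hy
      rw [Finset.mem_coe, Finset.mem_filter] at hy ⊢
      obtain ⟨hyO, hyx⟩ := hy
      refine ⟨(hmemO _).mpr (sub_not_mem' E ((hmemO _).mp hyO) hx), ?_⟩
      have h : (y - x) + (y - x) = (y + y) - (x + x) := by abel
      rw [h, hyx, sub_self]
    · intro a ha
      rw [Finset.mem_coe, Finset.mem_filter] at ha ⊢
      obtain ⟨haO, ha0⟩ := ha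
      refine ⟨(hmemO _).mpr (by
        intro h
        have h' : a + x ∈ E := h
        exact add_not_mem' E hx ((hmemO _).mp haO) (by rwa [add_comm] at h')), ?_⟩
      have h : (a + x) + (a + x) = (a + a) + (x + x) := by abel
      rw [h, ha0, zero_add]
    · intro y _; show y - x + x = y; abel
    · intro a _; show a + x - x = a; abel
  -- S1 : #{y ∈ O | 2y = x} = rE * 1[x ∈ W]
  have hS1 : ((O.filter fun y => y + y = x).card : ℚ)
      = ((Finset.univ.filter fun a : G => a ∈ E ∧ a + a = 0).card : ℚ) *
        (if x ∈ (fun a : G => a + a) '' ((E : Set G)ᶜ) then 1 else 0) := by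
    by_cases hW : x ∈ (fun a : G => a + a) '' ((E : Set G)ᶜ)
    · rw [if_pos hW, mul_one]
      obtain ⟨a₀, ha₀E', ha₀'⟩ := hW
      have ha₀ : a₀ + a₀ = x := ha₀'
      have ha₀E : a₀ ∉ E := by simpa using ha₀E'
      norm_cast
      refine (Finset.card_nbij' (fun y => y - a₀) (fun a => a + a₀) ?_ ?_ ?_ ?_)
      · intro y hy
        rw [Finset.mem_coe, Finset.mem_filter] at hy ⊢
        obtain ⟨hyO, hyx⟩ := hy
        refine ⟨Finset.mem_univ _,
          sub_mem_of_index_two E hE ((hmemO _).mp hyO) ha₀E, ?_⟩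
        have h : (y - a₀) + (y - a₀) = (y + y) - (a₀ + a₀) := by abel
        rw [h, hyx, ha₀, sub_self]
      · intro a ha
        rw [Finset.mem_coe, Finset.mem_filter] at ha
        obtain ⟨_, haE, ha0⟩ := ha
        rw [Finset.mem_coe, Finset.mem_filter]
        refine ⟨(hmemO _).mpr (add_not_mem' E haE ha₀E), ?_⟩
        have h : (a + a₀) + (a + a₀) = (a + a) + (a₀ + a₀) := by abel
        rw [h, ha0, zero_add, ha₀]
      · intro y _; show y - a₀ + a₀ = y; abel
      · intro a _; show a + a₀ - a₀ = a; abel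
    · rw [if_neg hW, mul_zero]
      norm_cast
      rw [Finset.card_eq_zero, Finset.filter_eq_empty_iff]
      intro y hy
      exact fun h => hW ⟨y, by simpa using (hmemO _).mp hy, h⟩
  -- edge count via degree sum
  have hedge : ((cayley E {x}).edgeSet.ncard : ℚ) * 2
      = ∑ y ∈ O, ((({x - y, y - x, y + x} : Finset G).erase y).card : ℚ) := by
    have h1 : (cayley E {x}).edgeSet.ncard = (cayley E {x}).edgeFinset.card := by
      rw [← SimpleGraph.coe_edgeFinset, Set.ncard_coe_finset]
    have h2 := SimpleGraph.sum_degrees_eq_twice_card_edges (cayley E {x})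
    have h3 : ∑ y ∈ O, ((({x - y, y - x, y + x} : Finset G).erase y).card : ℚ)
        = ∑ v : {g : G // g ∉ E}, ((cayley E {x}).degree v : ℚ) := by
      rw [Finset.sum_subtype (p := fun g : G => g ∉ E) O hmemO
        (fun y => ((({x - y, y - x, y + x} : Finset G).erase y).card : ℚ))]
      refine Finset.sum_congr rfl ?_
      rintro ⟨y, hy⟩ _
      rw [cayley_degree E x hx hy]
    rw [h3, h1]
    calc ((cayley E {x}).edgeFinset.card : ℚ) * 2
        = ((2 * (cayley E {x}).edgeFinset.card : ℕ) : ℚ) := by push_cast; ring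
      _ = ((∑ v : {g : G // g ∉ E}, (cayley E {x}).degree v : ℕ) : ℚ) := by rw [h2]
      _ = ∑ v : {g : G // g ∉ E}, ((cayley E {x}).degree v : ℚ) := by push_cast; rfl
  -- expand the sum
  have hsum : ∑ y ∈ O, ((({x - y, y - x, y + x} : Finset G).erase y).card : ℚ)
      = 3 * O.card - ((O.filter fun y => y + y = x).card : ℚ)
        - ((O.filter fun y => y + y = x + x).card : ℚ)
        - ((O.filter fun y => y + y = 0).card : ℚ)
        - (if x + x = 0 then 1 else 0) * O.card
        + (if x + x = 0 then 1 else 0) * ((O.filter fun y => y + y = 0).card : ℚ) := by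
    rw [Finset.sum_congr rfl (fun y _ => cardT x y hx0)]
    by_cases h4 : x + x = 0
    · simp only [if_pos h4, one_mul, mul_one]
      simp only [Finset.sum_add_distrib, Finset.sum_sub_distrib, Finset.sum_boole,
        Finset.sum_const, nsmul_eq_mul]
      ring
    · simp only [if_neg h4, zero_mul, mul_zero, sub_zero, add_zero]
      simp only [Finset.sum_add_distrib, Finset.sum_sub_distrib, Finset.sum_boole,
        Finset.sum_const, nsmul_eq_mul]
      ring
  -- finish
  rw [hrO, hrE]
  have key := hedge.trans (hsum.trans (by rw [hS1, hS2, hOcard]))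
  by_cases h4 : x + x = 0 <;>
    by_cases hW : x ∈ (fun a : G => a + a) '' ((E : Set G)ᶜ) <;>
    simp only [h4, hW, if_true, if_false] at key ⊢ <;>
    linarith
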